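/- arXiv:2007.00104 — 2 statements merged into one kernel-verified Lean document; each statement's English description precedes it below -/
import Mathlib

section
/- For a geometric number of attempts truncated at K with success probability P ∈ (0,1], the second moment of the number of attempts L = min(G,K) equals L̄ + 2(1-P)/P² − 2(1-P)^K (K − (1-P)(K−1))/P², where L̄ = (1-(1-P)^K)/P is the first moment. -/
lemma trunc_geom_aux (q : ℝ) (K : ℕ) :
    (∑ k ∈ Finset.range K, ((k : ℝ) + 1) ^ 2 * q ^ k) * (1 - q) ^ 3 =
      1 + q - q ^ K * (((K : ℝ) + 1) ^ 2 - (2 * (K : ℝ) ^ 2 + 2 * K - 1) * q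
        + (K : ℝ) ^ 2 * q ^ 2) := by
  induction K with
  | zero => simp
  | succ n ih =>
    rw [Finset.sum_range_succ, add_mul, ih]
    push_cast
    ring

/-- Second moment of the truncated geometric number of attempts `L = min(G,K)`:
`E[L²] = E[L] + 2(1-P)/P² − 2(1-P)^K (K − (1-P)(K−1))/P²`. -/
theorem truncated_geometric_second_moment (P : ℝ) (hP0 : 0 < P) (hP1 : P ≤ 1)
    (K : ℕ) (hK : 1 ≤ K) :
    ∑' k : ℕ, (min (k + 1) K : ℝ) ^ 2 * ((1 - P) ^ k * P) =
      (1 - (1 - P) ^ K) / P + 2 * (1 - P) / P ^ 2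
        - 2 * (1 - P) ^ K * ((K : ℝ) - (1 - P) * ((K : ℝ) - 1)) / P ^ 2 := by
  set q : ℝ := 1 - P with hq
  have hq0 : 0 ≤ q := by simp [hq]; linarith
  have hq1 : q < 1 := by simp [hq]; linarith
  have hgeo : Summable (fun k : ℕ => q ^ k) := summable_geometric_of_lt_one hq0 hq1
  have hf : Summable (fun k : ℕ => (min (k + 1) K : ℝ) ^ 2 * (q ^ k * P)) := by
    apply Summable.of_nonneg_of_le (fun k => by positivity)
      (fun k => ?_) ((hgeo.mul_left ((K : ℝ) ^ 2 * P)))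
    have h1 : (min (k + 1) K : ℝ) ≤ (K : ℝ) := by
      exact_mod_cast Nat.cast_le.mpr (min_le_right _ _)
    have h2 : (0 : ℝ) ≤ (min (k + 1) K : ℝ) := by positivity
    have : (min (k + 1) K : ℝ) ^ 2 ≤ (K : ℝ) ^ 2 := by nlinarith
    have hqk : (0 : ℝ) ≤ q ^ k * P := by positivity
    calc (min (k + 1) K : ℝ) ^ 2 * (q ^ k * P) ≤ (K : ℝ) ^ 2 * (q ^ k * P) := by
          exact mul_le_mul_of_nonneg_right this hqk
      _ = (K : ℝ) ^ 2 * P * q ^ k := by ring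
  rw [← hf.sum_add_tsum_nat_add K]
  have htail : ∑' i : ℕ, (min (i + K + 1) K : ℝ) ^ 2 * (q ^ (i + K) * P)
      = (K : ℝ) ^ 2 * q ^ K := by
    have heq : ∀ i : ℕ, (min (i + K + 1) K : ℝ) ^ 2 * (q ^ (i + K) * P)
        = ((K : ℝ) ^ 2 * (q ^ K * P)) * q ^ i := by
      intro i
      have hc : min ((i : ℝ) + K + 1) K = (K : ℝ) := min_eq_right (by
        have : (0:ℝ) ≤ (i:ℝ) := Nat.cast_nonneg i
        linarith)
      rw [hc, pow_add]
      ring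
    rw [tsum_congr heq, tsum_mul_left, tsum_geometric_of_lt_one hq0 hq1]
    have : (1 : ℝ) - q = P := by rw [hq]; ring
    rw [this]
    field_simp
  have hhead : ∑ k ∈ Finset.range K, (min (k + 1) K : ℝ) ^ 2 * (q ^ k * P)
      = ∑ k ∈ Finset.range K, ((k : ℝ) + 1) ^ 2 * (q ^ k * P) := by
    apply Finset.sum_congr rfl
    intro k hk
    have hkK : (k : ℝ) + 1 ≤ (K : ℝ) := by
      exact_mod_cast Nat.succ_le_of_lt (Finset.mem_range.mp hk)
    rw [min_eq_left hkK]
  have haux := trunc_geom_aux q K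
  have hP3 : (1 : ℝ) - q = P := by rw [hq]; ring
  rw [hP3] at haux
  have hsum : (∑ k ∈ Finset.range K, ((k : ℝ) + 1) ^ 2 * (q ^ k * P)) * P ^ 2
      = 1 + q - q ^ K * (((K : ℝ) + 1) ^ 2 - (2 * (K : ℝ) ^ 2 + 2 * K - 1) * q
        + (K : ℝ) ^ 2 * q ^ 2) := by
    rw [← haux]
    rw [Finset.sum_mul, Finset.sum_mul]
    apply Finset.sum_congr rfl
    intro k _
    ring
  have hPne : P ≠ 0 := hP0.ne'
  have hS : ∑ k ∈ Finset.range K, ((k : ℝ) + 1) ^ 2 * (q ^ k * P)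
      = (1 + q - q ^ K * (((K : ℝ) + 1) ^ 2 - (2 * (K : ℝ) ^ 2 + 2 * K - 1) * q
        + (K : ℝ) ^ 2 * q ^ 2)) / P ^ 2 := by
    rw [eq_div_iff (by positivity)]
    exact hsum
  push_cast
  rw [hhead, htail, hS, hq]
  field_simp
  ring
end

section
/- For two UAVs flying on concentric circles of radii r_i, r_j > 0 with uniformly distributed independent angular phase difference, the probability that their separation distance is at most d_tx equals (1/π)·arccos((r_i² + r_j² − d_tx²)/(2 r_i r_j)), provided |r_i − r_j| ≤ d_tx ≤ r_i + r_j. -/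
open Real MeasureTheory

/-- For two UAVs on concentric circles of radii `rᵢ, rⱼ` with uniformly
distributed angular phase difference on `[0, 2π)`, the probability that their
distance is at most `d` equals `(1/π)·arccos((rᵢ² + rⱼ² − d²)/(2 rᵢ rⱼ))`,
provided `|rᵢ − rⱼ| ≤ d ≤ rᵢ + rⱼ`. -/
theorem contact_probability (ri rj d : ℝ) (hri : 0 < ri) (hrj : 0 < rj)
    (hd1 : |ri - rj| ≤ d) (hd2 : d ≤ ri + rj) :
    (volume {φ ∈ Set.Ico (0 : ℝ) (2 * π) |
        Real.sqrt (ri ^ 2 + rj ^ 2 - 2 * ri * rj * Real.cos φ) ≤ d}).toReal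
      / (2 * π)
      = (1 / π) * Real.arccos ((ri ^ 2 + rj ^ 2 - d ^ 2) / (2 * ri * rj)) := by
  have hπ : 0 < π := Real.pi_pos
  set c : ℝ := (ri ^ 2 + rj ^ 2 - d ^ 2) / (2 * ri * rj) with hc
  have hrr : (0:ℝ) < 2 * ri * rj := by positivity
  have hd0 : 0 ≤ d := le_trans (abs_nonneg _) hd1
  have habs : (ri - rj) ^ 2 ≤ d ^ 2 := by
    nlinarith [sq_abs (ri - rj), abs_nonneg (ri - rj)]
  have hc1 : c ≤ 1 := by
    rw [hc, div_le_one hrr]; nlinarith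
  have hcm1 : -1 ≤ c := by
    rw [hc, le_div_iff₀ hrr]; nlinarith
  set α : ℝ := Real.arccos c with hα
  have hα0 : 0 ≤ α := Real.arccos_nonneg c
  have hαπ : α ≤ π := Real.arccos_le_pi c
  have hcosα : Real.cos α = c := Real.cos_arccos hcm1 hc1
  -- rewrite the set
  have hset : {φ ∈ Set.Ico (0 : ℝ) (2 * π) |
        Real.sqrt (ri ^ 2 + rj ^ 2 - 2 * ri * rj * Real.cos φ) ≤ d}
      = Set.Icc 0 α ∪ Set.Ico (2 * π - α) (2 * π) := by
    ext φ
    simp only [Set.mem_sep_iff, Set.mem_Ico, Set.mem_union, Set.mem_Icc]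
    have hiff : Real.sqrt (ri ^ 2 + rj ^ 2 - 2 * ri * rj * Real.cos φ) ≤ d
        ↔ c ≤ Real.cos φ := by
      rw [Real.sqrt_le_left hd0, hc, div_le_iff₀ hrr]
      constructor <;> intro h <;> nlinarith
    constructor
    · rintro ⟨⟨h0, h2⟩, hs⟩
      have hle : c ≤ Real.cos φ := hiff.mp hs
      by_cases hφπ : φ ≤ π
      · left
        refine ⟨h0, ?_⟩
        by_contra hcon
        push_neg at hcon
        have := Real.strictAntiOn_cos ⟨hα0, hαπ⟩ ⟨h0, hφπ⟩ hcon
        rw [hcosα] at this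
        linarith
      · right
        push_neg at hφπ
        refine ⟨?_, h2⟩
        have hcos' : Real.cos (2 * π - φ) = Real.cos φ := Real.cos_two_pi_sub φ
        by_contra hcon
        push_neg at hcon
        have h1 : α < 2 * π - φ := by linarith
        have h2' : 2 * π - φ ≤ π := by linarith
        have := Real.strictAntiOn_cos ⟨hα0, hαπ⟩ ⟨by linarith, h2'⟩ h1
        rw [hcosα, hcos'] at this
        linarith
    · rintro (⟨h0, hφα⟩ | ⟨h1, h2⟩)
      · refine ⟨⟨h0, by linarith⟩, hiff.mpr ?_⟩
        rw [← hcosα]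
        exact Real.cos_le_cos_of_nonneg_of_le_pi h0 hαπ hφα
      · refine ⟨⟨by linarith, h2⟩, hiff.mpr ?_⟩
        rw [← hcosα, ← Real.cos_two_pi_sub φ]
        exact Real.cos_le_cos_of_nonneg_of_le_pi (by linarith) hαπ (by linarith)
  rw [hset]
  have hdisj : MeasureTheory.AEDisjoint volume (Set.Icc (0:ℝ) α)
      (Set.Ico (2 * π - α) (2 * π)) := by
    refine measure_mono_null (fun x hx => ?_) (show volume (Set.Icc (2*π - α) α) = 0 from ?_)
    · exact ⟨hx.2.1, hx.1.2⟩
    · rw [Real.volume_Icc]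
      simp [ENNReal.ofReal_eq_zero]
      linarith
  rw [measure_union₀ measurableSet_Ico.nullMeasurableSet hdisj,
    Real.volume_Icc, Real.volume_Ico]
  have h1 : (2 * π - (2 * π - α)) = α := by ring
  have h2 : α - 0 = α := by ring
  rw [h1, h2, ← ENNReal.ofReal_add hα0 hα0, ENNReal.toReal_ofReal (by linarith)]
  rw [hα]
  field_simp
  ring
end
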